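/- Let k be a field, A a commutative k-algebra that is an integral domain, graded by a finitely generated additive abelian group G, and let H ≤ G be a subgroup of finite index. If the Veronese subalgebra A_H = ⊕_{h∈H} A_h is a finitely generated k-algebra, then A is a finitely generated k-algebra. -/

import Mathlib

/-- Let `A` be an integral domain graded by a finitely generated abelian group `G`
and `H ≤ G` a finite-index subgroup. If the Veronese subalgebra
`A_H = ⊕_{h ∈ H} A_h` is a finitely generated `k`-algebra, then so is `A`. -/
theorem finiteType_of_veronese_finiteType_finiteIndex
    {k A G : Type*} [Field k] [CommRing A] [IsDomain A] [Algebra k A]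
    [AddCommGroup G] [AddGroup.FG G] [DecidableEq G]
    (𝒜 : G → Submodule k A) [GradedAlgebra 𝒜]
    (H : AddSubgroup G) [H.FiniteIndex]
    (hV : (Algebra.adjoin k (⋃ h ∈ (H : Set G), (𝒜 h : Set A))).FG) :
    Algebra.FiniteType k A := by
  classical
  set B : Subalgebra k A := Algebra.adjoin k (⋃ h ∈ (H : Set G), (𝒜 h : Set A)) with hB
  have hBft : Algebra.FiniteType k ↥B := (Subalgebra.fg_iff_finiteType B).mp hV
  haveI : IsNoetherianRing ↥B := Algebra.FiniteType.isNoetherianRing k ↥B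
  -- membership of graded pieces with degree in H
  have hmemB : ∀ {h : G}, h ∈ H → ∀ {a : A}, a ∈ 𝒜 h → a ∈ B := by
    intro h hh a ha
    exact Algebra.subset_adjoin (Set.mem_biUnion hh ha)
  -- B as a B-submodule of A
  set SB : Submodule ↥B A := LinearMap.range (Algebra.linearMap ↥B A) with hSB
  have hSB_mem : ∀ {a : A}, a ∈ B → a ∈ SB := fun {a} ha => ⟨⟨a, ha⟩, rfl⟩
  haveI : IsNoetherian ↥B ↥SB := by
    have hinj : Function.Injective (Algebra.linearMap ↥B A) := by
      intro x y hxy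
      exact Subtype.ext hxy
    exact isNoetherian_of_linearEquiv (LinearEquiv.ofInjective _ hinj)
  -- any submodule below SB is finitely generated
  have hfg_of_le : ∀ N : Submodule ↥B A, N ≤ SB → N.FG := by
    intro N hN
    have h1 : (Submodule.comap SB.subtype N).FG := IsNoetherian.noetherian _
    have h2 := h1.map SB.subtype
    rwa [Submodule.map_comap_subtype, inf_eq_right.mpr hN] at h2
  -- the coset modules
  set M : G ⧸ H → Submodule ↥B A := fun c =>
    Submodule.span ↥B {a : A | ∃ g : G, (QuotientAddGroup.mk g : G ⧸ H) = c ∧ a ∈ 𝒜 g} with hM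
  -- each M c is finitely generated
  have hMfg : ∀ c, (M c).FG := by
    intro c
    by_cases hc : ∀ g : G, (QuotientAddGroup.mk g : G ⧸ H) = c → ∀ x ∈ 𝒜 g, x = (0 : A)
    · have : M c = ⊥ := by
        rw [hM]
        rw [Submodule.span_eq_bot]
        rintro a ⟨g, hg, ha⟩
        exact hc g hg a ha
      rw [this]; exact Submodule.fg_bot
    · push_neg at hc
      obtain ⟨g, hg, x, hx, hx0⟩ := hc
      set y : A := x ^ (H.index - 1) with hy
      have hy0 : y ≠ 0 := pow_ne_zero _ hx0
      have hydeg : y ∈ 𝒜 ((H.index - 1) • g) := SetLike.pow_mem_graded _ hx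
      -- multiplication by y
      set f : A →ₗ[↥B] A := LinearMap.mulLeft ↥B y with hf
      have hfinj : Function.Injective f := by
        intro a b hab
        exact mul_left_cancel₀ hy0 hab
      apply Submodule.fg_of_fg_map_injective f hfinj
      apply hfg_of_le
      rw [hM, Submodule.map_span, Submodule.span_le]
      rintro _ ⟨a, ⟨e, he, ha⟩, rfl⟩
      have hmul : y * a ∈ 𝒜 ((H.index - 1) • g + e) := SetLike.mul_mem_graded hydeg ha
      have hdeg : (H.index - 1) • g + e ∈ H := by
        have h1 : H.index • g ∈ H := H.nsmul_index_mem g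
        have h2 : -g + e ∈ H := (QuotientAddGroup.eq ).mp (hg.trans he.symm)
        have h3 : (H.index - 1) • g + e = H.index • g + (-g + e) := by
          have hne : H.index ≠ 0 := AddSubgroup.FiniteIndex.index_ne_zero
          have : (H.index - 1) + 1 = H.index := Nat.succ_pred_eq_of_pos (Nat.pos_of_ne_zero hne)
          calc (H.index - 1) • g + e = ((H.index - 1) • g + g) + (-g + e) := by abel
            _ = ((H.index - 1) + 1) • g + (-g + e) := by rw [succ_nsmul]
            _ = H.index • g + (-g + e) := by rw [this]
        rw [h3]
        exact AddSubgroup.add_mem H h1 h2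
      exact hSB_mem (hmemB hdeg hmul)
  -- the coset modules cover A
  have hMtop : (⊤ : Submodule ↥B A) = ⨆ c, M c := by
    refine le_antisymm ?_ le_top
    intro a _
    refine DirectSum.Decomposition.inductionOn 𝒜 (Submodule.zero_mem _) ?_ ?_ a
    · intro i m
      refine Submodule.mem_iSup_of_mem (QuotientAddGroup.mk i) ?_
      exact Submodule.subset_span ⟨i, rfl, m.2⟩
    · intro m m' hm hm'
      exact Submodule.add_mem _ hm hm'
  have hfin : Module.Finite ↥B A := by
    constructor
    rw [hMtop]
    exact Submodule.fg_iSup M hMfg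
  exact Algebra.FiniteType.trans hBft hfin.finiteType
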